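/- Fix integers n ≥ 1, κ ≥ 1 and j ∈ {1, …, n}. For each integer M with 0 ≤ 10^{−nκ}M < 1, the number a = 10^{−nκ}M has a unique expansion a = a₁·10^{−κ} + a₂·10^{−2κ} + ⋯ + a_n·10^{−nκ} with each a_i an integer satisfying 0 ≤ a_i < 10^κ. There exists a continuous function φ_j : [0,1] → ℝ such that for every such a and every t ∈ [a − 10^{−nκ−1}, a + 10^{−nκ−1}] ∩ [0,1], one has φ_j(t) = 10^{−κ} a_j (where a_j is the j-th digit in the expansion of a). -/

import Mathlib

open scoped BigOperators
open MeasureTheory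
open scoped Classical

/-- A feedforward neural network, given by a number of affine layers (`depth`),
layer dimensions (`dims i` is the dimension of the output of the `i`-th affine map,
with `dims 0` the input dimension; the output layer has dimension 1), weights and biases.
Data beyond the relevant indices is junk. -/
structure NeuralNet where
  depth : ℕ
  dims : ℕ → ℕ
  weight : ℕ → ℕ → ℕ → ℝ
  bias : ℕ → ℕ → ℝ

namespace NeuralNet

/-- Output of the `i`-th hidden layer (layer `0` is the input itself),
where the activation `σ` is applied entrywise after each affine map. -/
def hidden (σ : ℝ → ℝ) (net : NeuralNet) (x : ℕ → ℝ) : ℕ → ℕ → ℝ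
  | 0 => x
  | i + 1 => fun r =>
      σ ((∑ c ∈ Finset.range (net.dims i),
            net.weight (i + 1) r c * hidden σ net x i c) + net.bias (i + 1) r)

/-- The (scalar) output of the network: the final affine map `A_depth`
applied, without activation, to the last hidden layer. -/
def output (σ : ℝ → ℝ) (net : NeuralNet) (x : ℕ → ℝ) : ℝ :=
  (∑ c ∈ Finset.range (net.dims (net.depth - 1)),
    net.weight net.depth 0 c * hidden σ net x (net.depth - 1) c) + net.bias net.depth 0

/-- The width of a network: the maximal dimension of a hidden layer. -/
def width (net : NeuralNet) : ℕ :=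
  (Finset.Icc 1 (net.depth - 1)).sup net.dims

/-- The total number of (hidden) nodes of a network. -/
def totalNodes (net : NeuralNet) : ℕ :=
  ∑ i ∈ Finset.Icc 1 (net.depth - 1), net.dims i

/-- `net` represents the function `f : ℝ^d → ℝ` with activation `σ`. -/
def Represents (σ : ℝ → ℝ) (net : NeuralNet) {d : ℕ} (f : (Fin d → ℝ) → ℝ) : Prop :=
  1 ≤ net.depth ∧ net.dims 0 = d ∧
    ∀ x : Fin d → ℝ,
      net.output σ (fun i => if h : i < d then x ⟨i, h⟩ else 0) = f x

/-- `net` represents the function `f : ℝ^d → ℝ` with activation `σ`, as a network with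
truncated inputs: each input coordinate `x` is first replaced by `⌊base ^ κ * x⌋`. -/
def RepresentsTrunc (σ : ℝ → ℝ) (net : NeuralNet) (base : ℝ) {d : ℕ}
    (f : (Fin d → ℝ) → ℝ) : Prop :=
  ∃ κ : ℤ, 1 ≤ net.depth ∧ net.dims 0 = d ∧
    ∀ x : Fin d → ℝ,
      net.output σ (fun i => if h : i < d then (⌊base ^ κ * x ⟨i, h⟩⌋ : ℝ) else 0) = f x

end NeuralNet

/-- The ReLU activation function. -/
def relu : ℝ → ℝ := fun t => max t 0

/-- `σ` has the density property: for every dimension `d`, the span of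
`{x ↦ σ (w ⬝ x - θ)}` is dense in `C(ℝ^d)` for uniform convergence on compact sets. -/
def DensityProperty (σ : ℝ → ℝ) : Prop :=
  ∀ (d : ℕ) (f : (Fin d → ℝ) → ℝ), Continuous f →
    ∀ K : Set (Fin d → ℝ), IsCompact K → ∀ ε : ℝ, 0 < ε →
      ∃ (N : ℕ) (c : Fin N → ℝ) (w : Fin N → Fin d → ℝ) (θ : Fin N → ℝ),
        ∀ x ∈ K, |f x - ∑ i : Fin N, c i * σ ((∑ j : Fin d, w i j * x j) - θ i)| < ε

/-- `σ` is continuously differentiable at some point with a nonzero derivative there: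
differentiable on a neighborhood of `α`, with derivative continuous at `α` and nonzero. -/
def ContDiffAtNonzeroDeriv (σ : ℝ → ℝ) : Prop :=
  ∃ α : ℝ, (∀ᶠ x in nhds α, DifferentiableAt ℝ σ x) ∧
    ContinuousAt (deriv σ) α ∧ deriv σ α ≠ 0

/-- `σ` is a polynomial function. -/
def IsPolyFun (σ : ℝ → ℝ) : Prop :=
  ∃ p : Polynomial ℝ, ∀ x : ℝ, σ x = p.eval x

/-- `σ` is a non-affine polynomial function (degree at least 2). -/
def IsNonAffinePolyFun (σ : ℝ → ℝ) : Prop :=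
  ∃ p : Polynomial ℝ, 2 ≤ p.natDegree ∧ ∀ x : ℝ, σ x = p.eval x


lemma sum_lt_pow_aux (B m : ℕ) (e : ℕ → ℕ) (he : ∀ k, k < m → e k < B) :
    ∑ k ∈ Finset.range m, e k * B ^ k < B ^ m := by
  induction m with
  | zero => simp
  | succ m ih =>
    have hBm : e m < B := he m (by omega)
    calc ∑ k ∈ Finset.range (m+1), e k * B ^ k
        = (∑ k ∈ Finset.range m, e k * B ^ k) + e m * B ^ m := Finset.sum_range_succ _ _
      _ < B ^ m + e m * B ^ m := by
          have := ih (fun k hk => he k (by omega)); omega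
      _ = (1 + e m) * B ^ m := by ring
      _ ≤ B * B ^ m := Nat.mul_le_mul_right _ (by omega)
      _ = B ^ (m+1) := by ring

lemma digit_extract_aux (B n m : ℕ) (e : ℕ → ℕ) (he : ∀ k, k < n → e k < B) (hm : m < n) :
    (∑ k ∈ Finset.range n, e k * B ^ k) / B ^ m % B = e m := by
  have hB : 0 < B := lt_of_le_of_lt (Nat.zero_le _) (he m hm)
  have hsplit : ∑ k ∈ Finset.range n, e k * B ^ k
      = (∑ k ∈ Finset.range m, e k * B ^ k)
        + B ^ m * ∑ k ∈ Finset.range (n - m), e (m + k) * B ^ k := by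
    calc ∑ k ∈ Finset.range n, e k * B ^ k
        = ∑ k ∈ Finset.Ico 0 n, e k * B ^ k := by rw [Finset.range_eq_Ico]
      _ = (∑ k ∈ Finset.Ico 0 m, e k * B ^ k) + ∑ k ∈ Finset.Ico m n, e k * B ^ k :=
          (Finset.sum_Ico_consecutive _ (Nat.zero_le m) (le_of_lt hm)).symm
      _ = (∑ k ∈ Finset.range m, e k * B ^ k)
          + B ^ m * ∑ k ∈ Finset.range (n - m), e (m + k) * B ^ k := by
          rw [← Finset.range_eq_Ico, Finset.sum_Ico_eq_sum_range, Finset.mul_sum]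
          congr 1
          apply Finset.sum_congr rfl
          intro k _
          rw [pow_add]; ring
  rw [hsplit]
  rw [Nat.add_mul_div_left _ _ (show 0 < B ^ m from Nat.pow_pos hB),
    Nat.div_eq_of_lt (sum_lt_pow_aux B m e (fun k hk => he k (by omega))), Nat.zero_add]
  have hnm : n - m = (n - m - 1) + 1 := by omega
  rw [hnm, Finset.sum_range_succ']
  simp only [pow_zero, mul_one, Nat.add_zero]
  have h2 : ∑ k ∈ Finset.range (n - m - 1), e (m + (k + 1)) * B ^ (k + 1)
      = B * ∑ k ∈ Finset.range (n - m - 1), e (m + (k + 1)) * B ^ k := by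
    rw [Finset.mul_sum]
    apply Finset.sum_congr rfl
    intro k _; ring
  rw [h2, Nat.mul_add_mod, Nat.mod_eq_of_lt (he m hm)]

lemma digit_expand_aux (B n : ℕ) (hB : 0 < B) : ∀ M : ℕ, M < B ^ n →
    M = ∑ k ∈ Finset.range n, (M / B ^ k % B) * B ^ k := by
  induction n with
  | zero => intro M hM; simp at hM ⊢; omega
  | succ n ih =>
    intro M hM
    have hdiv : M / B < B ^ n := by
      rw [Nat.div_lt_iff_lt_mul hB]
      calc M < B ^ (n+1) := hM
        _ = B ^ n * B := by ring
    have heq : ∀ k, M / B ^ (k+1) % B * B ^ (k+1) = (M / B / B ^ k % B * B ^ k) * B := by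
      intro k
      rw [Nat.div_div_eq_div_mul, ← pow_succ']
      ring
    rw [Finset.sum_range_succ']
    simp only [pow_zero, Nat.pow_zero, Nat.div_one, mul_one]
    have h3 : ∑ k ∈ Finset.range n, M / B ^ (k+1) % B * B ^ (k+1) = B * (M / B) := by
      rw [Finset.sum_congr rfl (fun k _ => heq k), ← Finset.sum_mul, ← ih (M/B) hdiv, mul_comm]
    rw [h3]
    exact (Nat.div_add_mod M B).symm

lemma digit_unique_aux (n κ : ℕ) (hn : 1 ≤ n) (M : ℕ) (d : Fin n → ℕ)
    (hd : ∀ i, d i < 10 ^ κ)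
    (hM : M = ∑ i : Fin n, d i * 10 ^ ((n - 1 - (i : ℕ)) * κ)) :
    ∀ i : Fin n, d i = M / (10 ^ κ) ^ (n - 1 - (i : ℕ)) % 10 ^ κ := by
  set B := 10 ^ κ with hB
  have hsum : M = ∑ k ∈ Finset.range n, (fun k => d ⟨n - 1 - k, by omega⟩) k * B ^ k := by
    rw [hM, ← Finset.sum_range_reflect (fun k => (fun k => d ⟨n - 1 - k, by omega⟩) k * B ^ k) n]
    rw [← Fin.sum_univ_eq_sum_range (fun k => (fun k' => d ⟨n - 1 - k', by omega⟩)
      (n - 1 - k) * B ^ (n - 1 - k)) n]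
    apply Finset.sum_congr rfl
    intro i _
    have h1 : n - 1 - (n - 1 - (i : ℕ)) = (i : ℕ) := by omega
    simp only []
    congr 1
    · congr 1
      exact (Fin.ext h1.symm : i = ⟨n - 1 - (n - 1 - (i : ℕ)), by omega⟩)
    · rw [pow_mul' 10 (n - 1 - (i : ℕ)) κ]
  intro i
  have := digit_extract_aux B n (n - 1 - (i : ℕ)) (fun k => d ⟨n - 1 - k, by omega⟩)
    (fun k hk => hd _) (by omega)
  rw [← hsum] at this
  rw [this]
  congr 1
  exact Fin.ext (by simp; omega)

/-- unique base-`10^κ` expansion and existence of a continuous decoder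
function `φ_j` extracting (a rescaling of) the `j`-th digit on small intervals around
the points `a = M / 10^(nκ)`.  Digits are indexed by `i : Fin n`, with `d i`
playing the role of `a_{i+1}`, so that `a = ∑ i, d i * 10^(-(i+1)κ)`, i.e.
`M = ∑ i, d i * 10^((n-1-i)κ)`. -/
theorem statement9 (n κ : ℕ) (hn : 1 ≤ n) (hκ : 1 ≤ κ)
    (j : ℕ) (hj1 : 1 ≤ j) (hjn : j ≤ n) :
    (∀ M : ℕ, M < 10 ^ (n * κ) →
      ∃! d : Fin n → ℕ, (∀ i : Fin n, d i < 10 ^ κ) ∧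
        M = ∑ i : Fin n, d i * 10 ^ ((n - 1 - (i : ℕ)) * κ)) ∧
    ∃ φ : ℝ → ℝ, ContinuousOn φ (Set.Icc 0 1) ∧
      ∀ M : ℕ, M < 10 ^ (n * κ) →
        ∀ d : Fin n → ℕ, (∀ i : Fin n, d i < 10 ^ κ) →
          M = ∑ i : Fin n, d i * 10 ^ ((n - 1 - (i : ℕ)) * κ) →
          ∀ t ∈ Set.Icc ((M : ℝ) / 10 ^ (n * κ) - 1 / 10 ^ (n * κ + 1))
                ((M : ℝ) / 10 ^ (n * κ) + 1 / 10 ^ (n * κ + 1)) ∩ Set.Icc (0 : ℝ) 1,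
            φ t = (d ⟨j - 1, by omega⟩ : ℝ) / 10 ^ κ := by
  have hBpos : 0 < 10 ^ κ := Nat.pow_pos (by norm_num)
  have hNB : 10 ^ (n * κ) = (10 ^ κ) ^ n := pow_mul' 10 n κ
  constructor
  · -- uniqueness of digit expansion
    intro M hM
    refine ⟨fun i => M / (10 ^ κ) ^ (n - 1 - (i : ℕ)) % 10 ^ κ, ⟨?_, ?_⟩, ?_⟩
    · intro i
      exact Nat.mod_lt _ hBpos
    · -- M = sum
      have hMn : M < (10 ^ κ) ^ n := hNB ▸ hM
      have hexp := digit_expand_aux (10 ^ κ) n hBpos M hMn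
      calc M = ∑ k ∈ Finset.range n, (M / (10 ^ κ) ^ k % 10 ^ κ) * (10 ^ κ) ^ k := hexp
        _ = ∑ k ∈ Finset.range n,
              (M / (10 ^ κ) ^ (n - 1 - k) % 10 ^ κ) * (10 ^ κ) ^ (n - 1 - k) :=
            (Finset.sum_range_reflect (fun k => (M / (10 ^ κ) ^ k % 10 ^ κ) * (10 ^ κ) ^ k) n).symm
        _ = ∑ i : Fin n, (M / (10 ^ κ) ^ (n - 1 - (i : ℕ)) % 10 ^ κ) * 10 ^ ((n - 1 - (i : ℕ)) * κ) := by
            rw [← Fin.sum_univ_eq_sum_range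
              (fun k => (M / (10 ^ κ) ^ (n - 1 - k) % 10 ^ κ) * (10 ^ κ) ^ (n - 1 - k)) n]
            apply Finset.sum_congr rfl
            intro i _
            rw [pow_mul' 10 (n - 1 - (i : ℕ)) κ]
    · intro d ⟨hd1, hd2⟩
      funext i
      exact digit_unique_aux n κ hn M d hd1 hd2 i
  · -- the decoder function
    set N : ℕ := 10 ^ (n * κ) with hN
    set Nr : ℝ := (N : ℝ) with hNr
    have hNrpos : (0 : ℝ) < Nr := by positivity
    set ε : ℝ := 1 / (10 * Nr) with hε
    set I : ℕ → Set ℝ := fun M => Set.Icc ((M : ℝ) / Nr - ε) ((M : ℝ) / Nr + ε) with hI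
    set S : Set ℝ := ⋃ M ∈ Finset.range N, I M with hS
    set g : ℝ → ℝ :=
      fun t => (((round (Nr * t)).toNat / (10 ^ κ) ^ (n - j) % 10 ^ κ : ℕ) : ℝ) / (10 : ℝ) ^ κ
      with hg
    -- rounding on each interval
    have hround : ∀ (M : ℕ), ∀ t ∈ I M, round (Nr * t) = (M : ℤ) := by
      intro M t ht
      obtain ⟨ht1, ht2⟩ := ht
      have e1 : Nr * ((M : ℝ) / Nr) = M := by field_simp
      have e2 : Nr * ε = 1 / 10 := by rw [hε]; field_simp
      have h1 : (M : ℝ) - 1 / 10 ≤ Nr * t := by nlinarith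
      have h2 : Nr * t ≤ (M : ℝ) + 1 / 10 := by nlinarith
      rw [round_eq]
      refine Int.floor_eq_iff.mpr ⟨?_, ?_⟩ <;> push_cast <;> linarith
    have hgI : ∀ (M : ℕ), ∀ t ∈ I M,
        g t = ((M / (10 ^ κ) ^ (n - j) % 10 ^ κ : ℕ) : ℝ) / (10 : ℝ) ^ κ := by
      intro M t ht
      rw [hg]
      simp only [hround M t ht, Int.toNat_natCast]
    -- disjointness
    have hdisj : ∀ (M M' : ℕ), M ≠ M' → ∀ t, t ∈ I M → t ∉ I M' := by
      intro M M' hne t ht ht'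
      have h1 : (1 : ℝ) ≤ |(M : ℝ) - (M' : ℝ)| := by
        rcases Nat.lt_or_ge M M' with h | h
        · have hc : (M : ℝ) + 1 ≤ (M' : ℝ) := by exact_mod_cast h
          rw [abs_sub_comm, abs_of_nonneg (by linarith)]
          linarith
        · have h' : M' < M := lt_of_le_of_ne h fun hh => hne hh.symm
          have hc : (M' : ℝ) + 1 ≤ (M : ℝ) := by exact_mod_cast h'
          rw [abs_of_nonneg (by linarith)]
          linarith
      obtain ⟨ht1, ht2⟩ := ht
      obtain ⟨ht1', ht2'⟩ := ht'
      have e1 : Nr * ((M : ℝ) / Nr) = M := by field_simp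
      have e1' : Nr * ((M' : ℝ) / Nr) = M' := by field_simp
      have e2 : Nr * ε = 1 / 10 := by rw [hε]; field_simp
      rcases abs_cases ((M : ℝ) - (M' : ℝ)) with ⟨habs, _⟩ | ⟨habs, _⟩ <;> rw [habs] at h1 <;>
        nlinarith
    -- S is closed
    have hSclosed : IsClosed S := by
      rw [hS]
      exact isClosed_biUnion_finset (fun M _ => isClosed_Icc)
    -- g is continuous on S
    have hcont : ContinuousOn g S := by
      intro t ht
      rw [hS] at ht
      simp only [Set.mem_iUnion] at ht
      obtain ⟨M, hMN, htM⟩ := ht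
      set F : Set ℝ := ⋃ M' ∈ (Finset.range N).erase M, I M' with hF
      have hFclosed : IsClosed F := isClosed_biUnion_finset (fun M' _ => isClosed_Icc)
      have htF : t ∉ F := by
        rw [hF]
        simp only [Set.mem_iUnion, not_exists]
        intro M' hM' hmem
        exact hdisj M M' (fun h => (Finset.mem_erase.mp hM').1 h.symm) t htM hmem
      have hmem : Fᶜ ∈ nhdsWithin t S :=
        mem_nhdsWithin_of_mem_nhds (hFclosed.isOpen_compl.mem_nhds htF)
      have hSmem : S ∈ nhdsWithin t S := self_mem_nhdsWithin
      have heq : g =ᶠ[nhdsWithin t S]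
          fun _ => ((M / (10 ^ κ) ^ (n - j) % 10 ^ κ : ℕ) : ℝ) / (10 : ℝ) ^ κ := by
        filter_upwards [hmem, hSmem] with s hsF hsS
        rw [hS] at hsS
        simp only [Set.mem_iUnion] at hsS
        obtain ⟨M'', hM'', hsM''⟩ := hsS
        have hMM : M'' = M := by
          by_contra hne
          apply hsF
          rw [hF]
          simp only [Set.mem_iUnion]
          exact ⟨M'', Finset.mem_erase.mpr ⟨hne, hM''⟩, hsM''⟩
        rw [hMM] at hsM''
        exact hgI M s hsM''
      exact continuousWithinAt_const.congr_of_eventuallyEq heq (hgI M t htM)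
    -- Tietze extension
    obtain ⟨Φ, hΦ⟩ := ContinuousMap.exists_restrict_eq (Y := ℝ) hSclosed
      ⟨S.restrict g, hcont.restrict⟩
    have hΦeq : ∀ x ∈ S, Φ x = g x := by
      intro x hx
      have := congrFun (congrArg DFunLike.coe hΦ) ⟨x, hx⟩
      exact this
    refine ⟨Φ, Φ.continuous.continuousOn, ?_⟩
    intro M hM d hd hsum t ht
    obtain ⟨ht1, _⟩ := ht
    -- show t ∈ I M
    have hpow : ((10 : ℝ) ^ (n * κ)) = Nr := by rw [hNr, hN]; push_cast; ring
    have hpow1 : ((10 : ℝ) ^ (n * κ + 1)) = 10 * Nr := by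
      rw [pow_succ, hpow]; ring
    have htI : t ∈ I M := by
      rw [hI]
      constructor
      · have := ht1.1; rw [hpow, hpow1] at this; rw [hε]; linarith
      · have := ht1.2; rw [hpow, hpow1] at this; rw [hε]; linarith
    have htS : t ∈ S := by
      rw [hS]
      simp only [Set.mem_iUnion]
      exact ⟨M, Finset.mem_range.mpr hM, htI⟩
    rw [hΦeq t htS, hgI M t htI]
    have hdj := digit_unique_aux n κ hn M d hd hsum ⟨j - 1, by omega⟩
    have hidx : n - 1 - ((⟨j - 1, by omega⟩ : Fin n) : ℕ) = n - j := by simp; omega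
    rw [hidx] at hdj
    rw [hdj]
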